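/- Let K be a field of characteristic 0, and let f(x) = a₁x^{n₁} + a₂x^{n₂} + a₃x^{n₃} + a₄ with a₁a₂a₃ ≠ 0, n₁ > n₂ > n₃ ≥ 1 and n₁ + n₃ > 2n₂. Suppose f = g ∘ h with g, h ∈ K[x], deg g ≥ 2, deg h ≥ 2, h monic and h(0) = 0. Then h(x) = x^k for some k dividing gcd(n₁, n₂, n₃), and g(x) = a₁x^{n₁/k} + a₂x^{n₂/k} + a₃x^{n₃/k} + a₄. -/

import Mathlib

open Polynomial Finset

private lemma pow_trailing {K : Type*} [Field K] (h : K[X]) (hne : h ≠ 0) (l : ℕ) :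
    (h ^ l).natTrailingDegree = l * h.natTrailingDegree ∧
      (h ^ l).trailingCoeff = h.trailingCoeff ^ l := by
  induction l with
  | zero => simp [trailingCoeff]
  | succ n ih =>
      have hpne : h ^ n ≠ 0 := pow_ne_zero _ hne
      constructor
      · rw [pow_succ, natTrailingDegree_mul hpne hne, ih.1]; ring
      · rw [pow_succ, trailingCoeff_mul, ih.2, pow_succ]

theorem quadrinomial_decomposition {K : Type*} [Field K] [CharZero K]
    (a₁ a₂ a₃ a₄ : K) (ha₁ : a₁ ≠ 0) (ha₂ : a₂ ≠ 0) (ha₃ : a₃ ≠ 0)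
    (n₁ n₂ n₃ : ℕ) (hn₃ : 1 ≤ n₃) (h₃₂ : n₃ < n₂) (h₂₁ : n₂ < n₁)
    (hconv : 2 * n₂ < n₁ + n₃)
    (g h : K[X]) (hdg : 2 ≤ g.natDegree) (hdh : 2 ≤ h.natDegree)
    (hh : h.Monic) (hh0 : h.eval 0 = 0)
    (hcomp : C a₁ * X ^ n₁ + C a₂ * X ^ n₂ + C a₃ * X ^ n₃ + C a₄ = g.comp h) :
    ∃ k : ℕ, k ∣ Nat.gcd n₁ (Nat.gcd n₂ n₃) ∧ h = X ^ k ∧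
      g = C a₁ * X ^ (n₁ / k) + C a₂ * X ^ (n₂ / k) + C a₃ * X ^ (n₃ / k) + C a₄ := by
  set F : K[X] := C a₁ * X ^ n₁ + C a₂ * X ^ n₂ + C a₃ * X ^ n₃ + C a₄ with hFdef
  set k := h.natDegree with hkdef
  set m := g.natDegree with hmdef
  have e12 : ¬ (n₁ = n₂) := by omega
  have e13 : ¬ (n₁ = n₃) := by omega
  have e10 : ¬ (n₁ = 0) := by omega
  have e23 : ¬ (n₂ = n₃) := by omega
  have e20 : ¬ (n₂ = 0) := by omega
  have e30 : ¬ (n₃ = 0) := by omega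
  have e21 : ¬ (n₂ = n₁) := by omega
  have e31 : ¬ (n₃ = n₁) := by omega
  have e32 : ¬ (n₃ = n₂) := by omega
  -- coefficients of F
  have hcF : ∀ r : ℕ, F.coeff r ≠ 0 → r = n₁ ∨ r = n₂ ∨ r = n₃ ∨ r = 0 := by
    intro r hr
    by_contra hcon
    push_neg at hcon
    obtain ⟨h1, h2, h3, h4⟩ := hcon
    exact hr (by simp [hFdef, coeff_X_pow, coeff_C, h1, h2, h3, h4])
  have hFn1 : F.coeff n₁ = a₁ := by
    simp [hFdef, coeff_X_pow, coeff_C, e12, e13, e10]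
  have hFn2 : F.coeff n₂ = a₂ := by
    simp [hFdef, coeff_X_pow, coeff_C, e21, e23, e20]
  have hFn3 : F.coeff n₃ = a₃ := by
    simp [hFdef, coeff_X_pow, coeff_C, e31, e32, e30]
  have hdegFle : F.natDegree ≤ n₁ := by
    have b1 : (C a₁ * X ^ n₁).natDegree ≤ n₁ :=
      (natDegree_C_mul_le _ _).trans (natDegree_X_pow _).le
    have b2 : (C a₂ * X ^ n₂).natDegree ≤ n₁ :=
      (natDegree_C_mul_le _ _).trans ((natDegree_X_pow _).le.trans (by omega))
    have b3 : (C a₃ * X ^ n₃).natDegree ≤ n₁ :=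
      (natDegree_C_mul_le _ _).trans ((natDegree_X_pow _).le.trans (by omega))
    have b4 : (C a₄ : K[X]).natDegree ≤ n₁ := (natDegree_C _).le.trans (by omega)
    exact natDegree_add_le_of_degree_le
      (natDegree_add_le_of_degree_le (natDegree_add_le_of_degree_le b1 b2) b3) b4
  have hdegF : F.natDegree = n₁ :=
    le_antisymm hdegFle (le_natDegree_of_ne_zero (by rw [hFn1]; exact ha₁))
  have hhne : h ≠ 0 := hh.ne_zero
  have hmk : n₁ = m * k := by rw [← hdegF, hcomp, natDegree_comp]
  have hlcg : g.leadingCoeff = a₁ := by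
    have hc := leadingCoeff_comp (q := h) (p := g) (by omega)
    rw [← hcomp, hh.leadingCoeff, one_pow, mul_one] at hc
    rw [← hc, Polynomial.leadingCoeff, hdegF, hFn1]
  have hk0 : 0 < k := by omega
  -- the crucial step : h = X ^ k
  have hhXk : h = X ^ k := by
    by_contra hne
    obtain ⟨M, hM⟩ : ∃ M, m = M + 2 := ⟨m - 2, by omega⟩
    set p : K[X] := h - X ^ k with hpdef
    have hpne : p ≠ 0 := sub_ne_zero.mpr hne
    have hdegp : p.degree < h.degree := by
      apply degree_sub_lt _ hhne
      · rw [hh.leadingCoeff, leadingCoeff_X_pow]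
      · rw [degree_X_pow, degree_eq_natDegree hhne]
    have hdpk : p.natDegree < k := natDegree_lt_natDegree hpne hdegp
    set d := p.natDegree with hddef
    have hcoh0 : h.coeff 0 = 0 := by rw [coeff_zero_eq_eval_zero, hh0]
    have hd1 : 1 ≤ d := by
      rcases Nat.eq_zero_or_pos d with h0 | h1
      · exfalso
        have hpc := eq_C_of_natDegree_eq_zero h0
        have hc0 : p.coeff 0 = 0 := by
          simp [hpdef, coeff_X_pow, hcoh0]
          omega
        rw [hc0, map_zero] at hpc
        exact hpne hpc
      · exact h1
    have hhdec : h = X ^ k + p := by rw [hpdef]; ring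
    have hlp : p.leadingCoeff ≠ 0 := leadingCoeff_ne_zero.mpr hpne
    -- coefficient of h ^ m at (M+1)*k + d
    have hchm : (h ^ m).coeff ((M + 1) * k + d) = (M + 2 : K) * p.leadingCoeff := by
      rw [hhdec, hM, add_pow, Finset.sum_range_succ, Finset.sum_range_succ,
        coeff_add, coeff_add]
      have t1 : (∑ i ∈ Finset.range (M + 1),
          (X ^ k) ^ i * p ^ (M + 2 - i) * ((M + 2).choose i : K[X])).coeff
            ((M + 1) * k + d) = 0 := by
        rw [finset_sum_coeff]
        apply Finset.sum_eq_zero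
        intro i hi
        apply coeff_eq_zero_of_natDegree_lt
        have hiM : i ≤ M := Nat.lt_succ_iff.mp (Finset.mem_range.mp hi)
        obtain ⟨t, rfl⟩ : ∃ t, M = i + t := ⟨M - i, by omega⟩
        have hb : ((X ^ k : K[X]) ^ i * p ^ (i + t + 2 - i) *
            ((i + t + 2).choose i : K[X])).natDegree ≤ k * i + d * (t + 2) := by
          have h2 : i + t + 2 - i = t + 2 := by omega
          rw [h2]
          calc ((X ^ k : K[X]) ^ i * p ^ (t + 2) * ((i + t + 2).choose i : K[X])).natDegree
              ≤ ((X ^ k : K[X]) ^ i * p ^ (t + 2)).natDegree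
                + ((((i + t + 2).choose i : ℕ) : K[X])).natDegree := natDegree_mul_le
            _ ≤ ((X ^ k : K[X]) ^ i).natDegree + (p ^ (t + 2)).natDegree + 0 := by
                rw [natDegree_natCast]
                exact Nat.add_le_add_right natDegree_mul_le 0
            _ ≤ i * k + (t + 2) * d + 0 := by
                apply Nat.add_le_add_right
                apply add_le_add
                · exact (natDegree_pow_le (p := (X ^ k : K[X])) (n := i)).trans (by rw [natDegree_X_pow])
                · exact natDegree_pow_le
            _ = k * i + d * (t + 2) := by ring
        apply lt_of_le_of_lt hb
        have hdt : d * t ≤ k * t := Nat.mul_le_mul_right t (le_of_lt hdpk)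
        have hexp : (i + t + 1) * k + d = k * i + k * t + k + d := by ring
        have hexp2 : k * i + d * (t + 2) = k * i + d * t + 2 * d := by ring
        rw [hexp, hexp2]
        omega
      have t2 : ((X ^ k : K[X]) ^ (M + 1) * p ^ (M + 2 - (M + 1)) *
          ((M + 2).choose (M + 1) : K[X])).coeff ((M + 1) * k + d)
            = (M + 2 : K) * p.leadingCoeff := by
        have e1 : M + 2 - (M + 1) = 1 := by omega
        rw [e1, pow_one, Nat.choose_succ_self_right, ← C_eq_natCast, coeff_mul_C,
          ← pow_mul]
        have e2 : (M + 1) * k + d = d + k * (M + 1) := by ring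
        rw [e2, coeff_X_pow_mul, coeff_natDegree]
        push_cast
        ring
      have t3 : ((X ^ k : K[X]) ^ (M + 2) * p ^ (M + 2 - (M + 2)) *
          ((M + 2).choose (M + 2) : K[X])).coeff ((M + 1) * k + d) = 0 := by
        simp only [Nat.sub_self, pow_zero, mul_one, Nat.choose_self, Nat.cast_one]
        rw [← pow_mul, coeff_X_pow, if_neg]
        intro hcontra
        have : k * (M + 2) = (M + 1) * k + k := by ring
        omega
      rw [t1, t2, t3]
      ring
    -- hence F has this coefficient
    have hFN : F.coeff ((M + 1) * k + d) = a₁ * ((M + 2 : K) * p.leadingCoeff) := by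
      rw [hcomp, comp_eq_sum_left, sum_def, finset_sum_coeff]
      rw [Finset.sum_eq_single m]
      · have hgm : g.coeff m = a₁ := by rw [hmdef, coeff_natDegree, hlcg]
        rw [coeff_C_mul, hchm, hgm]
      · intro l hl hlm
        have hlle : l ≤ m := le_natDegree_of_mem_supp _ hl
        rw [coeff_C_mul]
        have : (h ^ l).coeff ((M + 1) * k + d) = 0 := by
          apply coeff_eq_zero_of_natDegree_lt
          rw [hh.natDegree_pow, ← hkdef]
          have : l * k ≤ (M + 1) * k := Nat.mul_le_mul_right k (by omega)
          omega
        rw [this, mul_zero]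
      · intro hns
        exfalso
        apply hns
        rw [mem_support_iff]
        intro hz
        rw [← coeff_natDegree, ← hmdef] at hlcg
        rw [hz] at hlcg
        exact ha₁ hlcg.symm
    have hFNne : F.coeff ((M + 1) * k + d) ≠ 0 := by
      rw [hFN]
      refine mul_ne_zero ha₁ (mul_ne_zero ?_ hlp)
      have h2ne : ((M + 2 : ℕ) : K) ≠ 0 := Nat.cast_ne_zero.mpr (by omega)
      push_cast at h2ne
      exact h2ne
    have hNcases := hcF _ hFNne
    have hkey1 : (M + 1) * k + d ≤ n₂ := by
      rcases hNcases with h1 | h2 | h3 | h4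
      · exfalso
        rw [hmk, hM] at h1
        have : (M + 2) * k = (M + 1) * k + k := by ring
        omega
      · omega
      · omega
      · exfalso; omega
    -- trailing degree analysis
    set s := h.natTrailingDegree with hsdef
    have hs1 : 1 ≤ s := by
      rcases Nat.eq_zero_or_pos s with h0 | h1
      · exfalso
        apply hhne
        apply trailingCoeff_eq_zero.mp
        rw [trailingCoeff, ← hsdef, h0, hcoh0]
      · exact h1
    have hsd : s ≤ d := by
      have hptd : p.natTrailingDegree ≤ d := natTrailingDegree_le_natDegree p
      have hco : h.coeff p.natTrailingDegree ≠ 0 := by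
        rw [hhdec, coeff_add, coeff_X_pow, if_neg (by omega)]
        rw [zero_add]
        exact fun hz => hpne (trailingCoeff_eq_zero.mp hz)
      exact le_trans (natTrailingDegree_le_of_ne_zero hco) hptd
    set G : K[X] := g - C a₄ with hGdef
    have hdG : G.natDegree = m := natDegree_sub_C
    have hGne : G ≠ 0 := by
      intro h0
      rw [h0, natDegree_zero] at hdG
      omega
    set e := G.natTrailingDegree with hedef
    have hem : e ≤ m := hdG ▸ natTrailingDegree_le_natDegree G
    have hFeval0 : F.eval 0 = a₄ := by
      simp [hFdef, zero_pow e10, zero_pow e20, zero_pow e30]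
    have hge0 : g.eval 0 = a₄ := by
      have : F.eval 0 = g.eval (h.eval 0) := by rw [hcomp, eval_comp]
      rw [hh0] at this
      rw [← this, hFeval0]
    have hGtcne : G.trailingCoeff ≠ 0 := fun hz => hGne (trailingCoeff_eq_zero.mp hz)
    have hGcoeff : (G.comp h).coeff (e * s) = G.trailingCoeff * h.trailingCoeff ^ e := by
      rw [comp_eq_sum_left, sum_def, finset_sum_coeff]
      rw [Finset.sum_eq_single e]
      · rw [coeff_C_mul]
        have h1 := (pow_trailing h hhne e).1
        have h2 := (pow_trailing h hhne e).2
        have h3 : (h ^ e).coeff ((h ^ e).natTrailingDegree) = (h ^ e).trailingCoeff := rfl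
        have h4 : G.coeff e = G.trailingCoeff := rfl
        rw [show e * s = (h ^ e).natTrailingDegree by rw [h1, hsdef], h3, h2, h4]
      · intro l hl hle
        have hell : e ≤ l := natTrailingDegree_le_of_ne_zero (mem_support_iff.mp hl)
        have helt : e < l := lt_of_le_of_ne hell (Ne.symm hle)
        rw [coeff_C_mul]
        have : (h ^ l).coeff (e * s) = 0 := by
          apply coeff_eq_zero_of_lt_natTrailingDegree
          rw [(pow_trailing h hhne l).1, ← hsdef]
          exact mul_lt_mul_of_pos_right helt (by omega)
        rw [this, mul_zero]
      · intro hns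
        exact absurd (mem_support_iff.mpr hGtcne) hns
    have hGcompF : G.comp h = F - C a₄ := by
      rw [hGdef, sub_comp, C_comp, hcomp]
    have hesne : (F - C a₄).coeff (e * s) ≠ 0 := by
      rw [← hGcompF, hGcoeff]
      exact mul_ne_zero hGtcne (pow_ne_zero _ (fun hz => hhne (trailingCoeff_eq_zero.mp hz)))
    have hes0 : e * s ≠ 0 := by
      intro h0
      apply hesne
      rw [h0, coeff_sub, coeff_C]
      have : F.coeff 0 = a₄ := by
        simp [hFdef, coeff_X_pow, coeff_C, Ne.symm e10, Ne.symm e20, Ne.symm e30]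
      rw [this]
      simp
    have hFes : F.coeff (e * s) ≠ 0 := by
      intro h0
      apply hesne
      rw [coeff_sub, h0, coeff_C, if_neg hes0, sub_zero]
    have hesge : n₃ ≤ e * s := by
      rcases hcF _ hFes with h1 | h2 | h3 | h4 <;> omega
    -- final contradiction
    have hms : n₃ ≤ m * d := by
      calc n₃ ≤ e * s := hesge
        _ ≤ m * s := Nat.mul_le_mul_right s hem
        _ ≤ m * d := Nat.mul_le_mul_left m hsd
    have hbig : n₃ + (M + 1) * n₁ ≤ m * n₂ := by
      have h1 : m * ((M + 1) * k + d) ≤ m * n₂ := Nat.mul_le_mul_left m hkey1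
      have h2 : m * ((M + 1) * k + d) = (M + 1) * (m * k) + m * d := by ring
      rw [h2, ← hmk] at h1
      omega
    have hMn : M * n₂ ≤ M * n₁ := Nat.mul_le_mul_left M (le_of_lt h₂₁)
    have hexp3 : (M + 1) * n₁ = M * n₁ + n₁ := by ring
    have hexp4 : m * n₂ = M * n₂ + 2 * n₂ := by rw [hM]; ring
    omega
  -- conclusion
  refine ⟨k, ?_, hhXk, ?_⟩
  · have hexpand : F = expand K k g := by
      rw [expand_eq_comp_X_pow, ← hhXk, hcomp]
    have hd2 : k ∣ n₂ := by
      by_contra hnd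
      have := hFn2
      rw [hexpand, coeff_expand hk0, if_neg hnd] at this
      exact ha₂ this.symm
    have hd3 : k ∣ n₃ := by
      by_contra hnd
      have := hFn3
      rw [hexpand, coeff_expand hk0, if_neg hnd] at this
      exact ha₃ this.symm
    have hd1 : k ∣ n₁ := ⟨m, by rw [hmk]; ring⟩
    exact Nat.dvd_gcd hd1 (Nat.dvd_gcd hd2 hd3)
  · have hexpand : F = expand K k g := by
      rw [expand_eq_comp_X_pow, ← hhXk, hcomp]
    have hd2 : k ∣ n₂ := by
      by_contra hnd
      have := hFn2
      rw [hexpand, coeff_expand hk0, if_neg hnd] at this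
      exact ha₂ this.symm
    have hd3 : k ∣ n₃ := by
      by_contra hnd
      have := hFn3
      rw [hexpand, coeff_expand hk0, if_neg hnd] at this
      exact ha₃ this.symm
    have hd1 : k ∣ n₁ := ⟨m, by rw [hmk]; ring⟩
    apply expand_injective hk0
    rw [← hexpand]
    rw [hFdef]
    simp only [map_add, map_mul, map_pow, expand_C, expand_X]
    rw [← pow_mul, ← pow_mul, ← pow_mul]
    rw [Nat.mul_div_cancel' hd1, Nat.mul_div_cancel' hd2, Nat.mul_div_cancel' hd3]
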